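/- Let G_π be a connected permutation graph on n vertices with domination number k, let D be a minimum dominating set of G_π, and let a ∈ D be the element of D whose position π⁻¹(a) is largest. Let τ ∈ S_{n+1} be obtained from π by inserting the value n+1 immediately to the left of a in the one-line notation of π. Then G_τ is a connected permutation graph on n+1 vertices with domination number k. -/

import Mathlib

/-- The permutation graph of `π`: vertices `0,…,n-1` (0-indexed version of `1,…,n`),
with `i < j` adjacent iff `π⁻¹ i > π⁻¹ j`. -/
def permGraph {n : ℕ} (π : Equiv.Perm (Fin n)) : SimpleGraph (Fin n) where
  Adj i j := (i < j ∧ π.symm j < π.symm i) ∨ (j < i ∧ π.symm i < π.symm j)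
  symm := by constructor; intro i j h; tauto
  loopless := by constructor; intro i h; rcases h with ⟨h, _⟩ | ⟨h, _⟩ <;> exact lt_irrefl i h

/-- `D` dominates `G`: every vertex is in `D` or adjacent to an element of `D`. -/
def Dominates {V : Type*} (G : SimpleGraph V) (D : Set V) : Prop :=
  ∀ v, v ∈ D ∨ ∃ d ∈ D, G.Adj v d

/-- The domination number: minimum cardinality of a dominating set. -/
noncomputable def domNumber {V : Type*} [Fintype V] (G : SimpleGraph V) : ℕ :=
  sInf {k | ∃ D : Finset V, D.card = k ∧ Dominates G ↑D}

/-- Closed neighborhood `N[x]`. -/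
def closedNbhd {V : Type*} (G : SimpleGraph V) (x : V) : Set V :=
  {y | y = x ∨ G.Adj x y}

/-- Degree of a vertex. -/
noncomputable def deg {V : Type*} (G : SimpleGraph V) (v : V) : ℕ :=
  (G.neighborSet v).ncard

lemma permGraph_adj {n : ℕ} (π : Equiv.Perm (Fin n)) (i j : Fin n) :
    (permGraph π).Adj i j ↔
      ((i < j ∧ π.symm j < π.symm i) ∨ (j < i ∧ π.symm i < π.symm j)) := Iff.rfl

theorem insert_top_preserves_domination {n k : ℕ} (π : Equiv.Perm (Fin n))
    (τ : Equiv.Perm (Fin (n + 1)))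
    (hconn : (permGraph π).Connected)
    (hγ : domNumber (permGraph π) = k)
    (D : Finset (Fin n)) (hD : Dominates (permGraph π) ↑D) (hcard : D.card = k)
    (a : Fin n) (ha : a ∈ D) (hmax : ∀ b ∈ D, π.symm b ≤ π.symm a)
    (hτ1 : τ (π.symm a).castSucc = Fin.last n)
    (hτ2 : ∀ i : Fin n, i < π.symm a → τ i.castSucc = (π i).castSucc)
    (hτ3 : ∀ i : Fin n, π.symm a ≤ i → τ i.succ = (π i).castSucc) :
    (permGraph τ).Connected ∧ domNumber (permGraph τ) = k := by
  classical
  set p : Fin n := π.symm a with hp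
  -- τ⁻¹ on old vertices
  have hsymmC : ∀ b : Fin n, τ.symm b.castSucc =
      (if π.symm b < p then (π.symm b).castSucc else (π.symm b).succ) := by
    intro b
    rw [Equiv.symm_apply_eq]
    by_cases h : π.symm b < p
    · rw [if_pos h, hτ2 _ h, Equiv.apply_symm_apply]
    · rw [if_neg h, hτ3 _ (le_of_not_gt h), Equiv.apply_symm_apply]
  have hsymmL : τ.symm (Fin.last n) = p.castSucc := by
    rw [Equiv.symm_apply_eq]; exact hτ1.symm
  -- the insertion map is order preserving
  have hlt : ∀ i j : Fin n,
      ((if i < p then i.castSucc else i.succ) < (if j < p then j.castSucc else j.succ))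
        ↔ i < j := by
    intro i j
    split_ifs with h1 h2 h2 <;>
      simp only [Fin.lt_def, Fin.coe_castSucc, Fin.val_succ, not_lt] at h1 h2 ⊢ <;>
      omega
  -- adjacency among old vertices is preserved
  have hadjC : ∀ i j : Fin n,
      (permGraph τ).Adj i.castSucc j.castSucc ↔ (permGraph π).Adj i j := by
    intro i j
    rw [permGraph_adj, permGraph_adj, hsymmC i, hsymmC j,
      Fin.castSucc_lt_castSucc_iff, Fin.castSucc_lt_castSucc_iff,
      hlt (π.symm j) (π.symm i), hlt (π.symm i) (π.symm j)]
  -- adjacency with the new top vertex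
  have hadjL : ∀ b : Fin n,
      (permGraph τ).Adj b.castSucc (Fin.last n) ↔ p ≤ π.symm b := by
    intro b
    rw [permGraph_adj, hsymmC b, hsymmL]
    have hb := b.isLt
    have hsb := (π.symm b).isLt
    have hpb := p.isLt
    split_ifs with hc <;>
      simp only [Fin.lt_def, Fin.le_def, Fin.coe_castSucc, Fin.val_succ, Fin.val_last,
        not_lt] at hc ⊢ <;>
      omega
  -- the maximum of D covers everything at position ≥ p
  set M : Fin n := D.max' ⟨a, ha⟩ with hM
  have hMD : M ∈ D := D.max'_mem _
  have haM : a ≤ M := D.le_max' a ha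
  have hMpos : π.symm M ≤ p := hmax M hMD
  have hcover : ∀ v : Fin n, p ≤ π.symm v → v = M ∨ (permGraph π).Adj v M := by
    intro v hv
    by_cases hva : v = a
    · subst hva
      rcases eq_or_lt_of_le haM with he | hlt'
      · exact Or.inl he
      · right
        rw [permGraph_adj]
        left
        refine ⟨hlt', lt_of_le_of_ne hMpos ?_⟩
        intro he2
        exact hlt'.ne (π.symm.injective (he2.trans hp)).symm
    · have hpv : p < π.symm v := by
        rcases lt_or_eq_of_le hv with h | h
        · exact h
        · exact absurd (π.symm.injective (hp.trans h)).symm hva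
      have hvD : v ∉ D := fun hvD => absurd (hmax v hvD) (not_le.mpr hpv)
      rcases hD v with hv' | ⟨d, hdD, hadj⟩
      · exact absurd (Finset.mem_coe.mp hv') hvD
      · have hdD' : d ∈ D := Finset.mem_coe.mp hdD
        rw [permGraph_adj] at hadj
        rcases hadj with ⟨hvd, _⟩ | ⟨_, hvd⟩
        · right
          rw [permGraph_adj]
          exact Or.inl ⟨lt_of_lt_of_le hvd (D.le_max' d hdD'), lt_of_le_of_lt hMpos hpv⟩
        · exact absurd (hmax d hdD') (not_le.mpr (hpv.trans hvd))
  -- connectivity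
  have hreachL : ∀ b : Fin n, (permGraph τ).Reachable b.castSucc (Fin.last n) := by
    intro b
    have hr : (permGraph π).Reachable b a := hconn.preconnected b a
    have h1 : (permGraph τ).Reachable b.castSucc a.castSucc :=
      hr.map ⟨Fin.castSucc, fun h => (hadjC _ _).mpr h⟩
    exact h1.trans ((hadjL a).mpr (le_of_eq hp)).reachable
  have hconnτ : (permGraph τ).Connected := by
    have hu : ∀ w : Fin (n + 1), (permGraph τ).Reachable w (Fin.last n) := by
      intro w
      cases w using Fin.lastCases with
      | last => exact SimpleGraph.Reachable.refl _
      | cast i => exact hreachL i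
    exact ⟨fun u v => (hu u).trans (hu v).symm⟩
  refine ⟨hconnτ, ?_⟩
  -- upper bound: image of D dominates
  have hdomτ : Dominates (permGraph τ) ↑(D.image Fin.castSucc) := by
    intro v
    cases v using Fin.lastCases with
    | last =>
      right
      refine ⟨a.castSucc, Finset.mem_coe.mpr (Finset.mem_image.mpr ⟨a, ha, rfl⟩), ?_⟩
      exact ((hadjL a).mpr (le_of_eq hp)).symm
    | cast b =>
      rcases hD b with hb | ⟨d, hdD, hadj⟩
      · exact Or.inl (Finset.mem_coe.mpr
          (Finset.mem_image.mpr ⟨b, Finset.mem_coe.mp hb, rfl⟩))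
      · exact Or.inr ⟨d.castSucc, Finset.mem_coe.mpr
          (Finset.mem_image.mpr ⟨d, Finset.mem_coe.mp hdD, rfl⟩), (hadjC b d).mpr hadj⟩
  have hcardτ : (D.image Fin.castSucc).card = k := by
    rw [Finset.card_image_of_injective _ (Fin.castSucc_injective n), hcard]
  -- lower bound
  have hlow : ∀ m ∈ {k | ∃ D' : Finset (Fin (n + 1)),
      D'.card = k ∧ Dominates (permGraph τ) ↑D'}, k ≤ m := by
    rintro m ⟨D', hc, hdom⟩
    set g : Fin (n + 1) → Fin n :=
      fun w => if h : w = Fin.last n then M else w.castPred h with hg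
    have hgC : ∀ v : Fin n, g v.castSucc = v := by
      intro v
      have h1 : v.castSucc ≠ Fin.last n := (Fin.castSucc_lt_last v).ne
      simp [hg, h1]
    have hgL : g (Fin.last n) = M := by simp [hg]
    have hdom'' : Dominates (permGraph π) ↑(D'.image g) := by
      intro v
      rcases hdom v.castSucc with hv | ⟨d, hdD', hadj⟩
      · left
        exact Finset.mem_coe.mpr
          (Finset.mem_image.mpr ⟨v.castSucc, Finset.mem_coe.mp hv, hgC v⟩)
      · have hdD'' : d ∈ D' := Finset.mem_coe.mp hdD'
        by_cases hdl : d = Fin.last n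
        · subst hdl
          have hpv : p ≤ π.symm v := (hadjL v).mp hadj
          have hMmem : M ∈ D'.image g :=
            Finset.mem_image.mpr ⟨Fin.last n, hdD'', hgL⟩
          rcases hcover v hpv with he | hadj2
          · exact Or.inl (Finset.mem_coe.mpr (he ▸ hMmem))
          · exact Or.inr ⟨M, Finset.mem_coe.mpr hMmem, hadj2⟩
        · right
          refine ⟨d.castPred hdl, Finset.mem_coe.mpr
            (Finset.mem_image.mpr ⟨d, hdD'', by simp [hg, hdl]⟩), ?_⟩
          have h2 : (permGraph τ).Adj v.castSucc (d.castPred hdl).castSucc := by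
            rw [Fin.castSucc_castPred]; exact hadj
          exact (hadjC _ _).mp h2
    have hk : k ≤ (D'.image g).card := by
      rw [← hγ]
      exact Nat.sInf_le ⟨D'.image g, rfl, hdom''⟩
    exact hk.trans (le_trans Finset.card_image_le (le_of_eq hc))
  apply le_antisymm
  · exact Nat.sInf_le ⟨D.image Fin.castSucc, hcardτ, hdomτ⟩
  · exact le_csInf ⟨k, D.image Fin.castSucc, hcardτ, hdomτ⟩ hlow
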